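/- Let $\phi\colon B\to B$ be an endomorphism of an abelian group $B$ such that for every $n$, the quotients $B/\phi^n B$ and kernels $B[\phi^n]$ are finite $p$-groups viewed as $\mathbb{F}_p$-vector spaces when of exponent $p$. Suppose $\phi^{p-1} = p\cdot u$ for an automorphism $u$ of $B$. Then $\dim_{\mathbb{F}_p} B/pB - \dim_{\mathbb{F}_p} B[p] = (p-1)\left(\dim_{\mathbb{F}_p} B/\phi B - \dim_{\mathbb{F}_p} B[\phi]\right)$, provided $B/\phi B$ and $B[\phi]$ are elementary abelian $p$-groups and all the groups appearing are finite. -/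

import Mathlib

open AddSubgroup QuotientAddGroup

/-- Multiplicativity of #coker · #ker under composition. -/
lemma chi_mul {B : Type*} [AddCommGroup B] (f g : B →+ B) :
    Nat.card (B ⧸ (g.comp f).range) * Nat.card f.ker * Nat.card g.ker
      = Nat.card (B ⧸ g.range) * Nat.card (B ⧸ f.range) * Nat.card (g.comp f).ker := by
  set C := (g.comp f).range with hC
  set F := f.range
  set G := g.range
  set S := F ⊔ g.ker with hS
  -- (1)
  have hCG : C ≤ G := by
    rintro x ⟨y, rfl⟩; exact ⟨f y, rfl⟩
  have h1 : C.relIndex G * G.index = C.index := relIndex_mul_index hCG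
  -- (2) : C.relIndex G = S.index
  have h2 : C.relIndex G = S.index := by
    set π : B →+ (G ⧸ C.addSubgroupOf G) :=
      (QuotientAddGroup.mk' (C.addSubgroupOf G)).comp g.rangeRestrict with hπ
    have hsurj : Function.Surjective π :=
      (QuotientAddGroup.mk'_surjective _).comp g.rangeRestrict_surjective
    have hker : π.ker = S := by
      ext x
      have : x ∈ π.ker ↔ g x ∈ C := by
        simp [hπ, AddMonoidHom.mem_ker, QuotientAddGroup.mk'_apply,
          QuotientAddGroup.eq_zero_iff, mem_addSubgroupOf, AddMonoidHom.rangeRestrict]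
        exact Iff.rfl
      rw [this]
      constructor
      · rintro ⟨y, hy⟩
        refine AddSubgroup.mem_sup.2 ⟨f y, ⟨y, rfl⟩, x - f y, ?_, by abel⟩
        show g (x - f y) = 0
        rw [map_sub, sub_eq_zero]
        exact hy.symm
      · rintro hx
        rcases AddSubgroup.mem_sup.1 hx with ⟨y, ⟨z, rfl⟩, w, hw, rfl⟩
        refine ⟨z, ?_⟩
        show g (f z) = g (f z + w)
        rw [map_add, show g w = 0 from hw, add_zero]
    calc C.relIndex G = Nat.card (G ⧸ C.addSubgroupOf G) := rfl
      _ = Nat.card (B ⧸ π.ker) :=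
        (Nat.card_congr (QuotientAddGroup.quotientKerEquivOfSurjective π hsurj).toEquiv).symm
      _ = S.index := by rw [hker]; rfl
  -- (3)
  have h3 : F.relIndex S * S.index = F.index := relIndex_mul_index le_sup_left
  -- (4) : F.relIndex S = F.relIndex g.ker via second iso
  have h4 : F.relIndex S = F.relIndex g.ker := by
    have e := QuotientAddGroup.quotientInfEquivSumNormalQuotient g.ker F
    have : (g.ker ⊔ F) = S := sup_comm _ _
    calc F.relIndex S = Nat.card (S ⧸ F.addSubgroupOf S) := rfl
      _ = Nat.card ((g.ker : AddSubgroup B) ⧸ F.addSubgroupOf g.ker) := by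
          rw [← this]; exact (Nat.card_congr e.toEquiv).symm
      _ = F.relIndex g.ker := rfl
  -- (5)
  have h5 : Nat.card (F.addSubgroupOf g.ker) * F.relIndex g.ker = Nat.card g.ker :=
    card_mul_index _
  -- (6) : Nat.card (g.comp f).ker = Nat.card f.ker * Nat.card (F.addSubgroupOf g.ker)
  have h6 : Nat.card (g.comp f).ker
      = Nat.card f.ker * Nat.card (F.addSubgroupOf g.ker) := by
    set h : (g.comp f).ker →+ (F.addSubgroupOf g.ker) :=
      AddMonoidHom.codRestrict
        (AddMonoidHom.codRestrict (f.comp (g.comp f).ker.subtype) g.ker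
          (fun x => x.2)
        ) (F.addSubgroupOf g.ker)
        (fun x => ⟨x.1, rfl⟩) with hh
    have hsurj : Function.Surjective h := by
      rintro ⟨⟨y, hy⟩, z, hz⟩
      refine ⟨⟨z, ?_⟩, ?_⟩
      · show g (f z) = 0
        rw [hz]; exact hy
      · apply Subtype.ext; apply Subtype.ext; exact hz
    have hkercard : Nat.card h.ker = Nat.card f.ker := by
      refine Nat.card_congr ⟨fun x => ⟨x.1.1, ?_⟩, fun x => ⟨⟨x.1, ?_⟩, ?_⟩, ?_, ?_⟩
      · have hx2 : h x.1 = 0 := x.2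
        exact congrArg (fun z => ((z : F.addSubgroupOf g.ker) : g.ker).1) hx2
      · show g (f x.1) = 0
        rw [show f x.1 = 0 from x.2, map_zero]
      · show h _ = 0
        exact Subtype.ext (Subtype.ext x.2)
      · intro x
        apply Subtype.ext; apply Subtype.ext
        rfl
      · intro x; rfl
    have hi : h.ker.index = Nat.card (F.addSubgroupOf g.ker) :=
      Nat.card_congr (QuotientAddGroup.quotientKerEquivOfSurjective h hsurj).toEquiv
    calc Nat.card (g.comp f).ker = Nat.card h.ker * h.ker.index := (card_mul_index _).symm
      _ = Nat.card f.ker * Nat.card (F.addSubgroupOf g.ker) := by rw [hkercard, hi]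
  -- combine
  show C.index * Nat.card f.ker * Nat.card g.ker
      = G.index * F.index * Nat.card (g.comp f).ker
  rw [← h1, h2, ← h5, ← h3, h4, h6]
  ring

/-- Let `φ` be an endomorphism of an abelian group `B` with `φ^(p-1) = p·u` for an
automorphism `u`, such that all groups `B/φ^iB` and `B[φ^i]` are finite, and
`B/φB`, `B[φ]` (and `B/pB`, `B[p]`) are elementary abelian `p`-groups with
`#(B/pB) = p^a`, `#B[p] = p^b`, `#(B/φB) = p^c`, `#B[φ] = p^d`.  Then
`a - b = (p-1)(c - d)`. -/
theorem dim_p_descent {B : Type*} [AddCommGroup B] (p : ℕ) (hp : p.Prime)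
    (φ : AddMonoid.End B) (u : (AddMonoid.End B)ˣ)
    (hu : φ ^ (p - 1) = (p : AddMonoid.End B) * (u : AddMonoid.End B))
    (hfinQ : ∀ i : ℕ, Finite (B ⧸ ((φ ^ i : AddMonoid.End B) : B →+ B).range))
    (hfinK : ∀ i : ℕ, Finite (AddMonoidHom.ker ((φ ^ i : AddMonoid.End B) : B →+ B)))
    (a b c d : ℕ)
    (ha : Nat.card (B ⧸ (zsmulAddGroupHom (p : ℤ) : B →+ B).range) = p ^ a)
    (hb : Nat.card (zsmulAddGroupHom (p : ℤ) : B →+ B).ker = p ^ b)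
    (hc : Nat.card (B ⧸ (φ : B →+ B).range) = p ^ c)
    (hd : Nat.card (AddMonoidHom.ker (φ : B →+ B)) = p ^ d)
    (hpc : ∀ x : B ⧸ (φ : B →+ B).range, p • x = 0)
    (hpd : ∀ x : AddMonoidHom.ker (φ : B →+ B), p • x = 0) :
    (a : ℤ) - b = (p - 1) * ((c : ℤ) - d) := by
  -- notation
  set Q : ℕ → ℕ := fun i => Nat.card (B ⧸ ((φ ^ i : AddMonoid.End B) : B →+ B).range)
    with hQdef
  set K : ℕ → ℕ := fun i => Nat.card (AddMonoidHom.ker ((φ ^ i : AddMonoid.End B) : B →+ B))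
    with hKdef
  -- multiplicativity step
  have key : ∀ i : ℕ,
      Q (i + 1) * (p ^ d) * K i = Q i * (p ^ c) * K (i + 1) := by
    intro i
    have hpow : (φ ^ (i + 1) : AddMonoid.End B) = (φ ^ i) * φ := pow_succ φ i
    have := chi_mul (φ : B →+ B) ((φ ^ i : AddMonoid.End B) : B →+ B)
    simp only [hQdef, hKdef, hpow]
    rw [← hd, ← hc]
    exact this
  -- positivity
  have hQpos : ∀ i, 0 < Q i := fun i => by
    haveI := hfinQ i; exact Nat.card_pos
  have hKpos : ∀ i, 0 < K i := fun i => by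
    haveI := hfinK i; exact Nat.card_pos
  -- chi of powers
  have hchi : ∀ i : ℕ, Q i * (p ^ d) ^ i = (p ^ c) ^ i * K i := by
    intro i
    induction i with
    | zero =>
      have h0r : ((φ ^ 0 : AddMonoid.End B) : B →+ B).range = ⊤ := by
        rw [pow_zero]
        ext x
        exact ⟨fun _ => trivial, fun _ => ⟨x, rfl⟩⟩
      have h0k : AddMonoidHom.ker ((φ ^ 0 : AddMonoid.End B) : B →+ B) = ⊥ := by
        rw [pow_zero]
        ext x
        exact ⟨fun h => h, fun h => h⟩
      have hq0 : Q 0 = 1 := by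
        simp only [hQdef, h0r]
        exact AddSubgroup.index_top
      have hk0 : K 0 = 1 := by
        simp only [hKdef, h0k]
        simp
      simp [hq0, hk0]
    | succ i ih =>
      have hmul : (Q i * K i) * (Q (i + 1) * (p ^ d) ^ (i + 1))
          = (Q i * K i) * ((p ^ c) ^ (i + 1) * K (i + 1)) := by
        calc (Q i * K i) * (Q (i + 1) * (p ^ d) ^ (i + 1))
            = (Q (i + 1) * (p ^ d) * K i) * (Q i * (p ^ d) ^ i) := by ring
          _ = (Q i * (p ^ c) * K (i + 1)) * (Q i * (p ^ d) ^ i) := by rw [key i]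
          _ = (Q i * (p ^ d) ^ i) * ((p ^ c) * Q i * K (i + 1)) := by ring
          _ = ((p ^ c) ^ i * K i) * ((p ^ c) * Q i * K (i + 1)) := by rw [ih]
          _ = (Q i * K i) * ((p ^ c) ^ (i + 1) * K (i + 1)) := by ring
      exact Nat.eq_of_mul_eq_mul_left (Nat.mul_pos (hQpos i) (hKpos i)) hmul
  -- identify φ^(p-1) with p·u, pointwise
  have e1' : ∀ x : B, ((φ ^ (p - 1) : AddMonoid.End B) : B →+ B) x
      = (p : ℤ) • ((u : AddMonoid.End B) x) := by
    intro x
    rw [hu]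
    exact (natCast_zsmul _ _).symm
  have huinv : ∀ x : B, (u : AddMonoid.End B) (((u⁻¹ : (AddMonoid.End B)ˣ) : AddMonoid.End B) x) = x := by
    intro x
    calc (u : AddMonoid.End B) (((u⁻¹ : (AddMonoid.End B)ˣ) : AddMonoid.End B) x)
        = ((u : AddMonoid.End B) * ((u⁻¹ : (AddMonoid.End B)ˣ) : AddMonoid.End B)) x := rfl
      _ = (1 : AddMonoid.End B) x := by rw [Units.mul_inv]
      _ = x := rfl
  have hinvu : ∀ x : B, ((u⁻¹ : (AddMonoid.End B)ˣ) : AddMonoid.End B) ((u : AddMonoid.End B) x) = x := by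
    intro x
    calc ((u⁻¹ : (AddMonoid.End B)ˣ) : AddMonoid.End B) ((u : AddMonoid.End B) x)
        = (((u⁻¹ : (AddMonoid.End B)ˣ) : AddMonoid.End B) * (u : AddMonoid.End B)) x := rfl
      _ = (1 : AddMonoid.End B) x := by rw [Units.inv_mul]
      _ = x := rfl
  -- #coker(φ^(p-1)) = p^a
  have hQa : Q (p - 1) = p ^ a := by
    have hrange : ((φ ^ (p - 1) : AddMonoid.End B) : B →+ B).range
        = (zsmulAddGroupHom (p : ℤ) : B →+ B).range := by
      ext x
      constructor
      · rintro ⟨y, rfl⟩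
        refine ⟨(u : AddMonoid.End B) y, ?_⟩
        show (p : ℤ) • ((u : AddMonoid.End B) y) = _
        exact (e1' y).symm
      · rintro ⟨y, rfl⟩
        refine ⟨((u⁻¹ : (AddMonoid.End B)ˣ) : AddMonoid.End B) y, ?_⟩
        show ((φ ^ (p - 1) : AddMonoid.End B) : B →+ B) _ = _
        rw [e1' _, huinv]
        rfl
    simp only [hQdef]
    rw [hrange]
    exact ha
  -- #ker(φ^(p-1)) = p^b
  have hKb : K (p - 1) = p ^ b := by
    have hcard : Nat.card (AddMonoidHom.ker ((φ ^ (p - 1) : AddMonoid.End B) : B →+ B))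
        = Nat.card (zsmulAddGroupHom (p : ℤ) : B →+ B).ker := by
      refine Nat.card_congr ⟨fun x => ⟨(u : AddMonoid.End B) x.1, ?_⟩,
        fun y => ⟨((u⁻¹ : (AddMonoid.End B)ˣ) : AddMonoid.End B) y.1, ?_⟩, ?_, ?_⟩
      · show (p : ℤ) • ((u : AddMonoid.End B) x.1) = 0
        rw [← e1' x.1]
        exact x.2
      · show ((φ ^ (p - 1) : AddMonoid.End B) : B →+ B) _ = 0
        rw [e1' _, huinv]
        exact y.2
      · intro x
        exact Subtype.ext (hinvu x.1)
      · intro y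
        exact Subtype.ext (huinv y.1)
    simp only [hKdef]
    rw [hcard]
    exact hb
  -- endgame
  have hmain := hchi (p - 1)
  rw [hQa, hKb, ← pow_mul, ← pow_mul, ← pow_add, ← pow_add] at hmain
  have hexp : a + d * (p - 1) = c * (p - 1) + b :=
    Nat.pow_right_injective hp.two_le hmain
  have hcast : (a : ℤ) + d * ((p : ℤ) - 1) = c * ((p : ℤ) - 1) + b := by
    have := congrArg (fun n : ℕ => (n : ℤ)) hexp
    push_cast [Nat.cast_sub hp.one_le] at this
    exact_mod_cast this
  linarith [hcast, mul_comm (c : ℤ) ((p : ℤ) - 1)]
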